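/- arXiv:2506.12865 — 2 statements merged into one kernel-verified Lean document; each statement's English description precedes it below -/
import Mathlib

section
/- The boundary map ∂₆: C_6 → C_5 of the ℤ/2 cellular chain complex of the paper is injective; consequently H_6 of the complex vanishes. -/
abbrev Ch (ι : Type) := ι → ZMod 2

/-- basis chain corresponding to a single cell -/
def ee {ι : Type} [DecidableEq ι] (i : ι) : Ch ι := Pi.single i 1

/-- the ℤ/2-linear boundary map determined by its values on cells -/
def mkBd {ι κ : Type} [Fintype ι] (d : ι → Ch κ) : Ch ι →ₗ[ZMod 2] Ch κ where
  toFun f := ∑ i, f i • d i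
  map_add' x y := by simp [add_smul, Finset.sum_add_distrib]
  map_smul' c x := by simp [Finset.smul_sum, smul_smul]

inductive Cells5
  | B
  | C12
  | C13
  | C14
  | C15
  | C21
  | C23
  | C24
  | C25
  | C31
  | C32
  | C34
  | C35
  | C41
  | C42
  | C43
  | C45
  | C51
  | C52
  | C53
  | C54
  | D12p
  | D12m
  | D13p
  | D13m
  | D14p
  | D14m
  | D23p
  | D23m
  | D24p
  | D24m
  | D34p
  | D34m
  | Ep
  | E1
  | E2
  | E3
  | Ab23
  | Ab24
  | Ab25
  | Ab26
  | Ab34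
  | Ab35
  | Ab36
  | Ab45
  | Ab46
  | Ab56
  deriving DecidableEq

instance : Fintype Cells5 :=
  Fintype.ofList [Cells5.B, Cells5.C12, Cells5.C13, Cells5.C14, Cells5.C15, Cells5.C21, Cells5.C23, Cells5.C24, Cells5.C25, Cells5.C31, Cells5.C32, Cells5.C34, Cells5.C35, Cells5.C41, Cells5.C42, Cells5.C43, Cells5.C45, Cells5.C51, Cells5.C52, Cells5.C53, Cells5.C54, Cells5.D12p, Cells5.D12m, Cells5.D13p, Cells5.D13m, Cells5.D14p, Cells5.D14m, Cells5.D23p, Cells5.D23m, Cells5.D24p, Cells5.D24m, Cells5.D34p, Cells5.D34m, Cells5.Ep, Cells5.E1, Cells5.E2, Cells5.E3, Cells5.Ab23, Cells5.Ab24, Cells5.Ab25, Cells5.Ab26, Cells5.Ab34, Cells5.Ab35, Cells5.Ab36, Cells5.Ab45, Cells5.Ab46, Cells5.Ab56] (fun x => by cases x <;> decide)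

inductive Cells6
  | A23
  | A24
  | A25
  | A26
  | A34
  | A35
  | A36
  | A45
  | A46
  | A56
  deriving DecidableEq

instance : Fintype Cells6 :=
  Fintype.ofList [Cells6.A23, Cells6.A24, Cells6.A25, Cells6.A26, Cells6.A34, Cells6.A35, Cells6.A36, Cells6.A45, Cells6.A46, Cells6.A56] (fun x => by cases x <;> decide)

/-- boundary values on cells -/
def d6 : Cells6 → Ch Cells5
  | .A23 => ee Cells5.C12 + ee Cells5.C21 + ee Cells5.B + ee Cells5.C45 + ee Cells5.C54 + ee Cells5.Ab23 + ee Cells5.Ab26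
  | .A24 => ee Cells5.C13 + ee Cells5.B + ee Cells5.C53 + ee Cells5.D23p + ee Cells5.Ab24 + ee Cells5.Ab36
  | .A25 => ee Cells5.C14 + ee Cells5.B + ee Cells5.C35 + ee Cells5.D23m + ee Cells5.D24p + ee Cells5.Ab25 + ee Cells5.Ab46
  | .A26 => ee Cells5.C15 + ee Cells5.C34 + ee Cells5.C43 + ee Cells5.D24m + ee Cells5.Ab26 + ee Cells5.Ab56
  | .A34 => ee Cells5.B + ee Cells5.C31 + ee Cells5.C52 + ee Cells5.D13p + ee Cells5.D23m + ee Cells5.Ab34 + ee Cells5.Ab45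
  | .A35 => ee Cells5.B + ee Cells5.D12p + ee Cells5.D13m + ee Cells5.D14p + ee Cells5.D23p + ee Cells5.D24m + ee Cells5.D34p + ee Cells5.Ep
  | .A36 => ee Cells5.C42 + ee Cells5.D12p + ee Cells5.D14m + ee Cells5.D24p + ee Cells5.D34m + ee Cells5.E3 + ee Cells5.Ab36 + ee Cells5.Ab34
  | .A45 => ee Cells5.B + ee Cells5.C25 + ee Cells5.C41 + ee Cells5.D12m + ee Cells5.D14p + ee Cells5.D34m + ee Cells5.E2 + ee Cells5.Ab45 + ee Cells5.Ab25
  | .A46 => ee Cells5.C24 + ee Cells5.D12m + ee Cells5.D13p + ee Cells5.D14m + ee Cells5.D34p + ee Cells5.E1 + ee Cells5.Ab46 + ee Cells5.Ab24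
  | .A56 => ee Cells5.C23 + ee Cells5.C32 + ee Cells5.C51 + ee Cells5.D13m + ee Cells5.Ab56 + ee Cells5.Ab23

/-- the boundary operator -/
def bd6 : Ch Cells6 →ₗ[ZMod 2] Ch Cells5 := mkBd d6


/-- ∂₆ is injective; consequently H₆ of the complex vanishes. -/
theorem bd6_injective : Function.Injective bd6 ∧ LinearMap.ker bd6 = ⊥ := by
  have huniv : (Finset.univ : Finset Cells6) =
      {.A23, .A24, .A25, .A26, .A34, .A35, .A36, .A45, .A46, .A56} := by decide
  have hker : ∀ f, bd6 f = 0 → f = 0 := by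
    intro f hf
    have hv : ∀ c, (∑ i, f i • d6 i) c = 0 := fun c => congrFun hf c
    simp only [huniv, Finset.sum_insert, Finset.mem_insert, Finset.mem_singleton,
      Finset.sum_singleton, Pi.add_apply, Pi.smul_apply] at hv
    funext i
    cases i
    · have := hv Cells5.C12; simp [d6, ee, Pi.single_apply] at this; simpa using this
    · have := hv Cells5.C13; simp [d6, ee, Pi.single_apply] at this; simpa using this
    · have := hv Cells5.C14; simp [d6, ee, Pi.single_apply] at this; simpa using this
    · have := hv Cells5.C15; simp [d6, ee, Pi.single_apply] at this; simpa using this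
    · have := hv Cells5.C31; simp [d6, ee, Pi.single_apply] at this; simpa using this
    · have := hv Cells5.Ep; simp [d6, ee, Pi.single_apply] at this; simpa using this
    · have := hv Cells5.E3; simp [d6, ee, Pi.single_apply] at this; simpa using this
    · have := hv Cells5.E2; simp [d6, ee, Pi.single_apply] at this; simpa using this
    · have := hv Cells5.E1; simp [d6, ee, Pi.single_apply] at this; simpa using this
    · have := hv Cells5.C23; simp [d6, ee, Pi.single_apply] at this; simpa using this
  have hinj : Function.Injective bd6 := by
    intro a b hab
    have : bd6 (a - b) = 0 := by simp [map_sub, hab]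
    have := hker _ this
    exact sub_eq_zero.mp this
  exact ⟨hinj, LinearMap.ker_eq_bot.mpr hinj⟩
end

section
/- In the ℤ/2 chain complex of the paper, the class [Θ] generates H_1 and is nonzero: Θ ∈ ker ∂₁ = C_1's cycle space restricted appropriately, Θ is not in the image of ∂₂, and every 1-cycle is homologous to 0 or to Θ̄; concretely, the quotient of the span of {Ȳ₁,Ȳ₂,Ū₁,Ū₂,Z̄,Θ̄,∇} by the image of ∂₂ is one-dimensional, spanned by the image of Θ̄. -/
inductive Cells1
  | Yb1
  | Yb2
  | Ub1
  | Ub2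
  | Zb
  | Thb
  | Nab
  deriving DecidableEq

instance : Fintype Cells1 where
  elems := {.Yb1, .Yb2, .Ub1, .Ub2, .Zb, .Thb, .Nab}
  complete := by intro x; cases x <;> simp

inductive Cells2
  | Y1
  | Y2
  | U1
  | U2
  | Z
  | Th
  | Lb123
  | Lb231
  | Lb312
  | Lb132
  | Lb213
  | Lb321
  | Mb1
  | Mb2
  | Mb3
  | Nb1
  | Nb2
  | Nb3
  | Pb1
  | Pb2
  | Sb1
  | Sb2
  | Xbp
  | Xbm
  | Vb1p
  | Vb2p
  | Vb1m
  | Vb2m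
  | Omb
  deriving DecidableEq

instance : Fintype Cells2 where
  elems := {.Y1, .Y2, .U1, .U2, .Z, .Th, .Lb123, .Lb231, .Lb312, .Lb132, .Lb213, .Lb321,
    .Mb1, .Mb2, .Mb3, .Nb1, .Nb2, .Nb3, .Pb1, .Pb2, .Sb1, .Sb2, .Xbp, .Xbm,
    .Vb1p, .Vb2p, .Vb1m, .Vb2m, .Omb}
  complete := by intro x; cases x <;> simp

/-- boundary values on cells -/
def d2 : Cells2 → Ch Cells1
  | .Y1 => ee Cells1.Nab + ee Cells1.Yb1 + ee Cells1.Yb2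
  | .Y2 => ee Cells1.Nab + ee Cells1.Yb2 + ee Cells1.Yb1
  | .U1 => ee Cells1.Nab + ee Cells1.Ub1 + ee Cells1.Ub2
  | .U2 => ee Cells1.Nab + ee Cells1.Ub2 + ee Cells1.Ub1
  | .Z => ee Cells1.Nab
  | .Th => 0
  | .Lb123 => ee Cells1.Ub1 + ee Cells1.Zb + ee Cells1.Yb2
  | .Lb231 => ee Cells1.Yb1 + ee Cells1.Ub2 + ee Cells1.Zb
  | .Lb312 => ee Cells1.Zb + ee Cells1.Yb2 + ee Cells1.Ub2
  | .Lb132 => ee Cells1.Yb1 + ee Cells1.Zb + ee Cells1.Ub2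
  | .Lb213 => ee Cells1.Ub1 + ee Cells1.Yb2 + ee Cells1.Zb
  | .Lb321 => ee Cells1.Zb + ee Cells1.Ub2 + ee Cells1.Yb2
  | .Mb1 => ee Cells1.Ub1 + ee Cells1.Yb1 + ee Cells1.Ub2
  | .Mb2 => ee Cells1.Ub1 + ee Cells1.Ub2 + ee Cells1.Yb1
  | .Mb3 => ee Cells1.Yb2
  | .Nb1 => ee Cells1.Yb1 + ee Cells1.Ub2 + ee Cells1.Yb2
  | .Nb2 => ee Cells1.Yb1 + ee Cells1.Yb2 + ee Cells1.Ub2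
  | .Nb3 => ee Cells1.Ub1
  | .Pb1 => 0
  | .Pb2 => 0
  | .Sb1 => 0
  | .Sb2 => 0
  | .Xbp => ee Cells1.Yb1 + ee Cells1.Yb2
  | .Xbm => ee Cells1.Yb1 + ee Cells1.Yb2
  | .Vb1p => ee Cells1.Yb1 + ee Cells1.Ub1
  | .Vb2p => ee Cells1.Yb2 + ee Cells1.Ub2
  | .Vb1m => ee Cells1.Yb1 + ee Cells1.Ub1
  | .Vb2m => ee Cells1.Yb2 + ee Cells1.Ub2
  | .Omb => 0

/-- the boundary operator -/
def bd2 : Ch Cells2 →ₗ[ZMod 2] Ch Cells1 := mkBd d2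


/-- projection to the Θ̄ coordinate -/
def pr : Ch Cells1 →ₗ[ZMod 2] ZMod 2 := LinearMap.proj Cells1.Thb

/-- a section: preimages of the basis 1-cells -/
def g1 : Cells1 → Ch Cells2
  | .Yb1 => ee Cells2.Xbp + ee Cells2.Mb3
  | .Yb2 => ee Cells2.Mb3
  | .Ub1 => ee Cells2.Nb3
  | .Ub2 => ee Cells2.Vb2p + ee Cells2.Mb3
  | .Zb => ee Cells2.Lb123 + ee Cells2.Nb3 + ee Cells2.Mb3
  | .Thb => 0
  | .Nab => ee Cells2.Z

def sec1 : Ch Cells1 →ₗ[ZMod 2] Ch Cells2 := mkBd g1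

lemma sum_single {ι : Type} [Fintype ι] [DecidableEq ι] (c : Ch ι) :
    ∑ i, c i • ee i = c := by
  ext j
  simp [ee, Finset.sum_apply, Pi.single_apply, mul_ite, mul_one, mul_zero]

lemma bd_thb (m : Ch Cells2) : bd2 m Cells1.Thb = 0 := by
  have h : ∀ i : Cells2, d2 i Cells1.Thb = 0 := by decide
  show (∑ i, m i • d2 i) Cells1.Thb = 0
  simp [Finset.sum_apply, h]

lemma hbasis : ∀ i : Cells1, i ≠ Cells1.Thb → bd2 (sec1 (ee i)) = ee i := by
  decide

lemma key (c : Ch Cells1) (h : c Cells1.Thb = 0) : bd2 (sec1 c) = c := by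
  have h1 : bd2 (sec1 c) = ∑ i, c i • bd2 (sec1 (ee i)) := by
    conv_lhs => rw [← sum_single c]
    simp only [map_sum, map_smul]
  have h2 : ∑ i, c i • bd2 (sec1 (ee i)) = ∑ i, c i • ee i := by
    refine Finset.sum_congr rfl fun i _ => ?_
    by_cases hi : i = Cells1.Thb
    · subst hi; rw [h]; simp
    · rw [hbasis i hi]
  rw [h1, h2, sum_single]

lemma range_eq : LinearMap.range bd2 = LinearMap.ker pr := by
  apply le_antisymm
  · rintro c ⟨m, rfl⟩
    exact bd_thb m
  · intro c hc
    exact ⟨sec1 c, key c hc⟩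

/-- [Θ̄] generates H₁ and is nonzero: Θ̄ ∉ im ∂₂, every 1-chain is congruent to
0 or Θ̄ modulo im ∂₂, the quotient C₁ / im ∂₂ is one-dimensional and spanned by
the image of Θ̄. -/
theorem Theta_generates_H1 :
    ee Cells1.Thb ∉ LinearMap.range bd2 ∧
    (∀ c : Ch Cells1, c ∈ LinearMap.range bd2 ∨
      c + ee Cells1.Thb ∈ LinearMap.range bd2) ∧
    Module.finrank (ZMod 2) (Ch Cells1 ⧸ LinearMap.range bd2) = 1 ∧
    Submodule.span (ZMod 2)
      {(Submodule.Quotient.mk (ee Cells1.Thb) :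
          Ch Cells1 ⧸ LinearMap.range bd2)} = ⊤ := by
  have hth : ee Cells1.Thb ∉ LinearMap.range bd2 := by
    rw [range_eq]
    intro h
    have : pr (ee Cells1.Thb) = 0 := h
    simp [pr, ee] at this
  have hsurj : Function.Surjective pr := by
    intro x
    exact ⟨x • ee Cells1.Thb, by simp [pr, ee]⟩
  have e : (Ch Cells1 ⧸ LinearMap.range bd2) ≃ₗ[ZMod 2] ZMod 2 := by
    rw [range_eq]
    exact pr.quotKerEquivOfSurjective hsurj
  have hfr : Module.finrank (ZMod 2) (Ch Cells1 ⧸ LinearMap.range bd2) = 1 := by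
    rw [e.finrank_eq, Module.finrank_self]
  refine ⟨hth, ?_, hfr, ?_⟩
  · intro c
    by_cases h : c Cells1.Thb = 0
    · left; rw [range_eq]; exact h
    · right; rw [range_eq]
      show (c + ee Cells1.Thb) Cells1.Thb = 0
      have h1 : c Cells1.Thb = 1 := by
        have : ∀ x : ZMod 2, x ≠ 0 → x = 1 := by decide
        exact this _ h
      simp only [Pi.add_apply, ee, Pi.single_eq_same, h1]
      decide
  · have hne : (Submodule.Quotient.mk (ee Cells1.Thb) :
        Ch Cells1 ⧸ LinearMap.range bd2) ≠ 0 := by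
      intro h
      exact hth ((Submodule.Quotient.mk_eq_zero _).mp h)
    apply Submodule.eq_top_of_finrank_eq
    rw [finrank_span_singleton hne, hfr]
end
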